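/- For every x ≥ 0, the value function on the road satisfies J(x, 0) = L_r(x); that is, the minimum defining J(x,0) is achieved by the pure-road option, so that for all τ ∈ (0,1) and z ∈ [0,x] one has (1−τ)·L_f((x−z)/(1−τ), 0) + τ·L_r(z/τ) ≥ L_r(x), and also L_f(x,0) ≥ L_r(x). -/

import Mathlib

open Real Filter Set

noncomputable section

/-- The field Lagrangian `L_f(v₁,v₂) = (v₁² + v₂²)/4 − 1`. -/
def Lf (v₁ v₂ : ℝ) : ℝ := (v₁ ^ 2 + v₂ ^ 2) / 4 - 1

/-- The effective road Hamiltonian `H_r(q) = q² + (p_q)² + 1` built from the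
critical-slope function `pq`. -/
def Hr (pq : ℝ → ℝ) (q : ℝ) : ℝ := q ^ 2 + pq q ^ 2 + 1

/-- The road Lagrangian: the Legendre transform of `Hr`. -/
def Lr (pq : ℝ → ℝ) (v : ℝ) : ℝ := ⨆ q : ℝ, (v * q - Hr pq q)

/-- `pq` assigns to each `q` the critical slope `p_q`: it equals `0` when
`(D−1)q² ≤ 1`, and otherwise it is the unique positive root of
`(D−1)q² = p² + 1 + μp/(κν + p)`. -/
def IsCriticalSlope (D μ ν κ : ℝ) (pq : ℝ → ℝ) : Prop :=
  ∀ q : ℝ,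
    ((D - 1) * q ^ 2 ≤ 1 → pq q = 0) ∧
    (1 < (D - 1) * q ^ 2 →
      0 < pq q ∧ (D - 1) * q ^ 2 = pq q ^ 2 + 1 + μ * pq q / (κ * ν + pq q))

/-- The set of candidate costs in the control problem at a point `(x,y)` with
`x ≥ 0`, `y ≥ 0`: the pure-field cost, the broken road-then-field costs, and
(when `y = 0`) the pure-road cost. -/
def Jset (pq : ℝ → ℝ) (x y : ℝ) : Set ℝ :=
  {Lf x y} ∪
    {c | ∃ τ z : ℝ, 0 < τ ∧ τ < 1 ∧ 0 ≤ z ∧ z ≤ x ∧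
      c = (1 - τ) * Lf ((x - z) / (1 - τ)) (y / (1 - τ)) + τ * Lr pq (z / τ)} ∪
    (if y = 0 then {Lr pq x} else ∅)

/-- The value function `J(x,y)`, extended evenly in `x`. -/
def J (pq : ℝ → ℝ) (x y : ℝ) : ℝ := sInf (Jset pq |x| y)
/-- The field Hamiltonian `H_f(q,p) = q² + p² + 1`. -/
def Hf (q p : ℝ) : ℝ := q ^ 2 + p ^ 2 + 1

/-- The road boundary Hamiltonian `F₀(q,p) = Dq² − μp/(κν + p)`. -/
def F0 (D μ ν κ q p : ℝ) : ℝ := D * q ^ 2 - μ * p / (κ * ν + p)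

/-- The spreading speed along the road, `inf_{q>0} H_r(q)/q`. -/
def roadSpeed (pq : ℝ → ℝ) : ℝ := sInf ((fun q => Hr pq q / q) '' Set.Ioi (0 : ℝ))

/-- The directional spreading speed in direction `ϑ` (measured from the
positive `y`-axis). -/
def cstar (pq : ℝ → ℝ) (ϑ : ℝ) : ℝ :=
  sSup {r : ℝ | 0 ≤ r ∧ J pq (r * Real.sin ϑ) (r * Real.cos ϑ) ≤ 0}

/-- Reflection across the line through the origin in direction `(cos a, sin a)`. -/
def Psi (a : ℝ) (p : ℝ × ℝ) : ℝ × ℝ :=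
  (p.1 * Real.cos (2 * a) + p.2 * Real.sin (2 * a),
   p.1 * Real.sin (2 * a) - p.2 * Real.cos (2 * a))

/-- The closed cone of opening angle `2a` between the positive `x`-axis and the
ray at angle `π/2 − 2a` from the positive `y`-axis. -/
def coneA (a : ℝ) : Set (ℝ × ℝ) :=
  {p | ∃ r ϑ : ℝ, 0 ≤ r ∧ π / 2 - 2 * a ≤ ϑ ∧ ϑ ≤ π / 2 ∧
    p = (r * Real.sin ϑ, r * Real.cos ϑ)}

lemma term_le (pq : ℝ → ℝ) (v q : ℝ) : v * q - Hr pq q ≤ v ^ 2 / 4 - 1 := by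
  have h : pq q ^ 2 ≥ 0 := sq_nonneg _
  have : (v / 2 - q) ^ 2 ≥ 0 := sq_nonneg _
  simp only [Hr]; nlinarith

lemma bdd (pq : ℝ → ℝ) (v : ℝ) :
    BddAbove (Set.range fun q => v * q - Hr pq q) :=
  ⟨v ^ 2 / 4 - 1, by rintro _ ⟨q, rfl⟩; exact term_le pq v q⟩

lemma Lr_le_Lf (pq : ℝ → ℝ) (v : ℝ) : Lr pq v ≤ Lf v 0 := by
  refine ciSup_le fun q => ?_
  have := term_le pq v q
  simp only [Lf]; nlinarith

lemma term_le_Lr (pq : ℝ → ℝ) (v q : ℝ) : v * q - Hr pq q ≤ Lr pq v :=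
  le_ciSup (bdd pq v) q

lemma Lr_convex (pq : ℝ → ℝ) (a b τ : ℝ) (h0 : 0 < τ) (h1 : τ < 1) :
    Lr pq ((1 - τ) * a + τ * b) ≤ (1 - τ) * Lr pq a + τ * Lr pq b := by
  refine ciSup_le fun q => ?_
  have ha := term_le_Lr pq a q
  have hb := term_le_Lr pq b q
  nlinarith

lemma broken_ge (pq : ℝ → ℝ) (x τ z : ℝ) (h0 : 0 < τ) (h1 : τ < 1)
    (hz : 0 ≤ z) (hzx : z ≤ x) :
    Lr pq x ≤ (1 - τ) * Lf ((x - z) / (1 - τ)) 0 + τ * Lr pq (z / τ) := by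
  have hτ : (1 - τ) ≠ 0 := by linarith
  have hτ' : τ ≠ 0 := ne_of_gt h0
  have hx' : x = (1 - τ) * ((x - z) / (1 - τ)) + τ * (z / τ) := by
    field_simp
    ring
  have h2 := Lr_convex pq ((x - z) / (1 - τ)) (z / τ) τ h0 h1
  rw [← hx'] at h2
  have h3 := Lr_le_Lf pq ((x - z) / (1 - τ))
  nlinarith

/-- On the road `y = 0`, the value function is given by the pure-road cost:
`J(x,0) = L_r(x)` for `x ≥ 0`; indeed every broken path costs at least
`L_r(x)`, and so does the pure-field path. -/
theorem J_on_road
    (D μ ν κ : ℝ) (hD : 1 < D) (hμ : 0 < μ) (hν : 0 < ν) (hκ : 0 < κ)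
    (pq : ℝ → ℝ) (hpq : IsCriticalSlope D μ ν κ pq)
    (x : ℝ) (hx : 0 ≤ x) :
    J pq x 0 = Lr pq x ∧
    (∀ τ z : ℝ, 0 < τ → τ < 1 → 0 ≤ z → z ≤ x →
      Lr pq x ≤ (1 - τ) * Lf ((x - z) / (1 - τ)) 0 + τ * Lr pq (z / τ)) ∧
    Lr pq x ≤ Lf x 0 := by
  refine ⟨?_, fun τ z h0 h1 hz hzx => broken_ge pq x τ z h0 h1 hz hzx, Lr_le_Lf pq x⟩
  have hxabs : |x| = x := abs_of_nonneg hx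
  have hmem : Lr pq x ∈ Jset pq |x| 0 := by
    rw [hxabs]
    exact Or.inr (by simp [Jset])
  have hlb : ∀ c ∈ Jset pq |x| 0, Lr pq x ≤ c := by
    rw [hxabs]
    rintro c (h | h)
    · rcases h with h | h
      · rw [Set.mem_singleton_iff] at h; rw [h]; exact Lr_le_Lf pq x
      · obtain ⟨τ, z, h0, h1, hz, hzx, rfl⟩ := h
        simpa using broken_ge pq x τ z h0 h1 hz hzx
    · simp only [if_pos rfl, Set.mem_singleton_iff] at h
      rw [h]
  exact le_antisymm (csInf_le ⟨Lr pq x, hlb⟩ hmem) (le_csInf ⟨_, hmem⟩ hlb)
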